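/- Let A be an n×n matrix over a field F and T a subset of indices such that the principal submatrix A[T] is invertible. Then the principal pivot transform A*T is the unique matrix such that for all vectors x, y: y = Ax if and only if (A*T)u = v, where u agrees with y on coordinates in T and with x elsewhere, and v agrees with x on coordinates in T and with y elsewhere. -/

import Mathlib

open Matrix

/-- The principal pivot transform `A * T` of a square matrix `A` on the set
`T = {i | p i}` of indices: writing `A` in block form `(P Q; R S)` with
`P = A[T]`, the principal pivot transform is
`(P⁻¹, -P⁻¹Q; RP⁻¹, S - RP⁻¹Q)`. -/
noncomputable def ppt {V : Type*} [Fintype V] [DecidableEq V] {F : Type*} [Field F]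
    (A : Matrix V V F) (p : V → Prop) [DecidablePred p] : Matrix V V F :=
  let P := A.submatrix (fun i : {x // p x} => (i : V)) (fun i : {x // p x} => (i : V))
  let Q := A.submatrix (fun i : {x // p x} => (i : V)) (fun i : {x // ¬ p x} => (i : V))
  let R := A.submatrix (fun i : {x // ¬ p x} => (i : V)) (fun i : {x // p x} => (i : V))
  let S := A.submatrix (fun i : {x // ¬ p x} => (i : V)) (fun i : {x // ¬ p x} => (i : V))
  (Matrix.fromBlocks P⁻¹ (-(P⁻¹ * Q)) (R * P⁻¹) (S - R * P⁻¹ * Q)).submatrix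
    (Equiv.sumCompl p).symm (Equiv.sumCompl p).symm

private lemma comp_equiv_inj {α β γ : Sort*} (e : α ≃ β) {f g : β → γ} :
    f ∘ e = g ∘ e ↔ f = g := by
  constructor
  · intro h; funext b
    have := congrFun h (e.symm b); simpa using this
  · rintro rfl; rfl


private lemma comp_symm_comp {α β γ : Sort*} (e : α ≃ β) (f : α → γ) :
    (f ∘ ⇑e.symm) ∘ ⇑e = f := funext fun i => by simp

private lemma sum_elim_eq_iff {α β γ : Type*} {a c : α → γ} {b d : β → γ} :
    Sum.elim a b = Sum.elim c d ↔ a = c ∧ b = d := by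
  constructor
  · intro h
    exact ⟨funext fun i => congrFun h (Sum.inl i), funext fun i => congrFun h (Sum.inr i)⟩
  · rintro ⟨rfl, rfl⟩; rfl

private lemma block_key {m n F : Type*} [Fintype m] [Fintype n] [DecidableEq m] [Field F]
    (P : Matrix m m F) (Q : Matrix m n F) (R : Matrix n m F) (S : Matrix n n F)
    (h : IsUnit P.det) (x₁ y₁ : m → F) (x₂ y₂ : n → F) :
    (P *ᵥ x₁ + Q *ᵥ x₂ = y₁ ∧ R *ᵥ x₁ + S *ᵥ x₂ = y₂) ↔
      (P⁻¹ *ᵥ y₁ + (-(P⁻¹ * Q)) *ᵥ x₂ = x₁ ∧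
        (R * P⁻¹) *ᵥ y₁ + (S - R * P⁻¹ * Q) *ᵥ x₂ = y₂) := by
  have hPP : P⁻¹ * P = 1 := nonsing_inv_mul P h
  have hPP' : P * P⁻¹ = 1 := mul_nonsing_inv P h
  have e1 : ∀ x₁ : m → F, P *ᵥ x₁ + Q *ᵥ x₂ = y₁ ↔
      x₁ = P⁻¹ *ᵥ y₁ - (P⁻¹ * Q) *ᵥ x₂ := by
    intro x₁
    constructor
    · intro hh
      have := congrArg (fun v => P⁻¹ *ᵥ v) hh
      simp only [mulVec_add, mulVec_mulVec, hPP, one_mulVec] at this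
      rw [← this]; simp [mulVec_mulVec]
    · rintro rfl
      simp only [mulVec_sub, mulVec_mulVec, ← Matrix.mul_assoc, hPP', Matrix.one_mul,
        one_mulVec]
      abel
  constructor
  · rintro ⟨h1, h2⟩
    have hx := (e1 x₁).1 h1
    constructor
    · rw [hx, neg_mulVec]; abel
    · rw [← h2, hx]
      simp only [mulVec_sub, sub_mulVec, mulVec_mulVec, Matrix.mul_assoc]
      abel
  · rintro ⟨h1, h2⟩
    have hx : x₁ = P⁻¹ *ᵥ y₁ - (P⁻¹ * Q) *ᵥ x₂ := by
      rw [← h1, neg_mulVec]; abel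
    refine ⟨(e1 x₁).2 hx, ?_⟩
    rw [← h2, hx]
    simp only [mulVec_sub, sub_mulVec, mulVec_mulVec, Matrix.mul_assoc]
    abel

/-- If `A[T]` is invertible, then the principal pivot transform `A * T` is the
unique matrix `B` such that for all vectors `x, y`: `y = Ax` iff `Bu = v`,
where `u` agrees with `y` on `T` and with `x` elsewhere, and `v` agrees with
`x` on `T` and with `y` elsewhere. -/
theorem ppt_unique_partial_inverse {V : Type*} [Fintype V] [DecidableEq V]
    {F : Type*} [Field F] (A : Matrix V V F) (p : V → Prop) [DecidablePred p]
    (h : IsUnit (A.submatrix (fun i : {x // p x} => (i : V))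
      (fun i : {x // p x} => (i : V))).det) :
    ∀ B : Matrix V V F,
      B = ppt A p ↔
        ∀ x y : V → F,
          A.mulVec x = y ↔
            B.mulVec (fun i => if p i then y i else x i) =
              (fun i => if p i then x i else y i) := by
  classical
  set P := A.submatrix (fun i : {x // p x} => (i : V)) (fun i : {x // p x} => (i : V)) with hP
  set Q := A.submatrix (fun i : {x // p x} => (i : V)) (fun i : {x // ¬ p x} => (i : V)) with hQ
  set R := A.submatrix (fun i : {x // ¬ p x} => (i : V)) (fun i : {x // p x} => (i : V)) with hR
  set S := A.submatrix (fun i : {x // ¬ p x} => (i : V)) (fun i : {x // ¬ p x} => (i : V)) with hS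
  set e : {x // p x} ⊕ {x // ¬ p x} ≃ V := Equiv.sumCompl p with he
  have hppt : ppt A p = (fromBlocks P⁻¹ (-(P⁻¹ * Q)) (R * P⁻¹) (S - R * P⁻¹ * Q)).submatrix
      e.symm e.symm := rfl
  have hAblock : A.submatrix (⇑e) (⇑e) = fromBlocks P Q R S := by
    ext i j
    cases i <;> cases j <;> rfl
  -- main property of ppt
  have main : ∀ x y : V → F,
      A.mulVec x = y ↔
        (ppt A p).mulVec (fun i => if p i then y i else x i) =
          (fun i => if p i then x i else y i) := by
    intro x y
    -- decompose
    have hx : x ∘ e = Sum.elim (fun i : {x // p x} => x i) (fun i : {x // ¬ p x} => x i) := by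
      funext i; cases i <;> rfl
    have hy : y ∘ e = Sum.elim (fun i : {x // p x} => y i) (fun i : {x // ¬ p x} => y i) := by
      funext i; cases i <;> rfl
    have hu : (fun i => if p i then y i else x i) ∘ e =
        Sum.elim (fun i : {x // p x} => y i) (fun i : {x // ¬ p x} => x i) := by
      funext i
      cases i with
      | inl i => simp [he, if_pos i.2, i.2]
      | inr i => simp [he, if_neg i.2, i.2]
    have hv : (fun i => if p i then x i else y i) ∘ e =
        Sum.elim (fun i : {x // p x} => x i) (fun i : {x // ¬ p x} => y i) := by
      funext i
      cases i with
      | inl i => simp [he, if_pos i.2, i.2]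
      | inr i => simp [he, if_neg i.2, i.2]
    calc A.mulVec x = y
        ↔ (A.mulVec x) ∘ e = y ∘ e := (comp_equiv_inj e).symm
      _ ↔ (fromBlocks P Q R S).mulVec (x ∘ e) = y ∘ e := by
          rw [← hAblock]
          have : (A.submatrix (⇑e) (⇑e)).mulVec (x ∘ e) = (A.mulVec x) ∘ e := by
            rw [submatrix_mulVec_equiv]
            rw [show (x ∘ ⇑e) ∘ ⇑e.symm = x from funext fun i => by simp]
          rw [this]
      _ ↔ _ := ?_
    rw [hx, hy, fromBlocks_mulVec, sum_elim_eq_iff]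
    have lhs2 : ((ppt A p).mulVec (fun i => if p i then y i else x i) =
          (fun i => if p i then x i else y i)) ↔
        (fromBlocks P⁻¹ (-(P⁻¹ * Q)) (R * P⁻¹) (S - R * P⁻¹ * Q)).mulVec
            (Sum.elim (fun i : {x // p x} => y i) (fun i : {x // ¬ p x} => x i)) =
          Sum.elim (fun i : {x // p x} => x i) (fun i : {x // ¬ p x} => y i) := by
      rw [hppt, submatrix_mulVec_equiv]
      rw [show ((fun i => if p i then y i else x i) ∘ ⇑e.symm.symm) =
          Sum.elim (fun i : {x // p x} => y i) (fun i : {x // ¬ p x} => x i) from by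
        simpa using hu]
      rw [← comp_equiv_inj e, comp_symm_comp, hv]
    rw [lhs2, fromBlocks_mulVec, sum_elim_eq_iff]
    simp only [Sum.elim_comp_inl, Sum.elim_comp_inr]
    exact block_key P Q R S h _ _ _ _
  intro B
  constructor
  · rintro rfl; exact main
  · intro hB
    -- uniqueness: show B *ᵥ u = ppt A p *ᵥ u for all u
    have key : ∀ u : V → F, B.mulVec u = (ppt A p).mulVec u := by
      intro u
      set x₂ : {x // ¬ p x} → F := fun i => u i with hx₂
      set y₁ : {x // p x} → F := fun i => u i with hy₁
      set x₁ : {x // p x} → F := P⁻¹ *ᵥ (y₁ - Q *ᵥ x₂) with hx₁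
      set x : V → F := fun i => if hi : p i then x₁ ⟨i, hi⟩ else x₂ ⟨i, hi⟩ with hxdef
      set y : V → F := A.mulVec x with hydef
      have hux : ∀ i : {x // ¬ p x}, x (i : V) = u i := fun i => by
        simp [hxdef, dif_neg i.2, hx₂]
      have huy : ∀ i : {x // p x}, y (i : V) = u i := by
        intro i
        have hcomp : (A.mulVec x) ∘ e = (fromBlocks P Q R S).mulVec (x ∘ e) := by
          rw [← hAblock, submatrix_mulVec_equiv]
          rw [show (x ∘ ⇑e) ∘ ⇑e.symm = x from funext fun j => by simp]
        have hxe : x ∘ e = Sum.elim x₁ x₂ := by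
          funext j
          cases j with
          | inl j => simp [hxdef, he, dif_pos j.2]
          | inr j => simp [hxdef, he, dif_neg j.2]
        have h1 : (A.mulVec x) (e (Sum.inl i)) = (P *ᵥ x₁ + Q *ᵥ x₂) i := by
          have := congrFun hcomp (Sum.inl i)
          rw [hxe, fromBlocks_mulVec] at this
          simpa using this
        have h2 : P *ᵥ x₁ + Q *ᵥ x₂ = y₁ := by
          rw [hx₁, mulVec_mulVec, mul_nonsing_inv P h, one_mulVec]
          abel
        have : (A.mulVec x) (e (Sum.inl i)) = y₁ i := by rw [h1, h2]
        simpa [hydef, he] using this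
      have huu : (fun i => if p i then y i else x i) = u := by
        funext i
        by_cases hi : p i
        · simpa [hi] using huy ⟨i, hi⟩
        · simpa [hi] using hux ⟨i, hi⟩
      have hAxy : A.mulVec x = y := rfl
      have e1 := (hB x y).1 hAxy
      have e2 := (main x y).1 hAxy
      rw [huu] at e1 e2
      rw [e1, e2]
    ext i j
    have := congrFun (key (Pi.single j 1)) i
    simpa [mulVec_single] using this
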